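/- Assume C_HN < C_HA and set κ = (C_L − C_HN)/(C_HA − C_HN). For every p ∈ [0,1] with p ≤ κ, the HP-value at p is at most the LP-value at p; hence V(p) = HP-value(p) and offering the high-privacy coupon is optimal at belief p. -/

import Mathlib

/-- Two-state consumer model: transition probabilities `lNA ≤ lAA`, costs
`CHN ≤ CL ≤ CHA`, discount factor `β ∈ (0,1)`. -/
structure CouponModel where
  lNA : ℝ
  lAA : ℝ
  CHN : ℝ
  CL : ℝ
  CHA : ℝ
  β : ℝ
  lNA_nonneg : 0 ≤ lNA
  lNA_le_lAA : lNA ≤ lAA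
  lAA_le_one : lAA ≤ 1
  CHN_le_CL : CHN ≤ CL
  CL_le_CHA : CL ≤ CHA
  β_pos : 0 < β
  β_lt_one : β < 1

namespace CouponModel

/-- Belief-update map `T(p) = (1-p)·λNA + p·λAA`. -/
noncomputable def T (M : CouponModel) (p : ℝ) : ℝ := (1 - p) * M.lNA + p * M.lAA

/-- Bellman operator. -/
noncomputable def B (M : CouponModel) (f : ℝ → ℝ) (p : ℝ) : ℝ :=
  min (M.CL + M.β * f (M.T p))
    ((1 - p) * M.CHN + p * M.CHA + M.β * ((1 - p) * f M.lNA + p * f M.lAA))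

/-- A function `f : ℝ → ℝ` is bounded on the belief space `[0,1]`. -/
def IsBdd (f : ℝ → ℝ) : Prop := ∃ C : ℝ, ∀ p ∈ Set.Icc (0:ℝ) 1, |f p| ≤ C

/-- `V` is a bounded fixed point of the Bellman operator on `[0,1]`. -/
def IsValue (M : CouponModel) (V : ℝ → ℝ) : Prop :=
  IsBdd V ∧ ∀ p ∈ Set.Icc (0:ℝ) 1, V p = M.B V p

/-- Value of offering the low-privacy coupon at belief `p`. -/
noncomputable def LPval (M : CouponModel) (V : ℝ → ℝ) (p : ℝ) : ℝ :=
  M.CL + M.β * V (M.T p)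

/-- Value of offering the high-privacy coupon at belief `p`. -/
noncomputable def HPval (M : CouponModel) (V : ℝ → ℝ) (p : ℝ) : ℝ :=
  (1 - p) * M.CHN + p * M.CHA + M.β * ((1 - p) * V M.lNA + p * V M.lAA)

/-- `τ` is a threshold for `V`: HP is optimal below `τ`, LP is optimal above `τ`. -/
def IsThreshold (M : CouponModel) (V : ℝ → ℝ) (τ : ℝ) : Prop :=
  τ ∈ Set.Icc (0:ℝ) 1 ∧
    (∀ p ∈ Set.Icc (0:ℝ) τ, V p = M.HPval V p) ∧
    (∀ p ∈ Set.Icc τ (1:ℝ), V p = M.LPval V p)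

end CouponModel

namespace CouponModel

variable (M : CouponModel)

lemma lNA_mem : M.lNA ∈ Set.Icc (0:ℝ) 1 :=
  ⟨M.lNA_nonneg, M.lNA_le_lAA.trans M.lAA_le_one⟩

lemma lAA_mem : M.lAA ∈ Set.Icc (0:ℝ) 1 :=
  ⟨M.lNA_nonneg.trans M.lNA_le_lAA, M.lAA_le_one⟩

lemma T_mem {p : ℝ} (hp : p ∈ Set.Icc (0:ℝ) 1) : M.T p ∈ Set.Icc (0:ℝ) 1 := by
  obtain ⟨h0, h1⟩ := hp
  have h2 := M.lNA_nonneg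
  have h3 := M.lNA_le_lAA
  have h4 := M.lAA_le_one
  constructor <;> [skip; skip] <;> unfold T <;> nlinarith

/-- Pointwise contraction estimate for the Bellman operator. -/
lemma contract (f g : ℝ → ℝ) (ε : ℝ)
    (hfg : ∀ q ∈ Set.Icc (0:ℝ) 1, |f q - g q| ≤ ε)
    {p : ℝ} (hp : p ∈ Set.Icc (0:ℝ) 1) :
    |M.B f p - M.B g p| ≤ M.β * ε := by
  obtain ⟨h0, h1⟩ := hp
  have hβ := M.β_pos.le
  have h1' : |f (M.T p) - g (M.T p)| ≤ ε := hfg _ (M.T_mem ⟨h0, h1⟩)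
  have h2 : |f M.lNA - g M.lNA| ≤ ε := hfg _ M.lNA_mem
  have h3 : |f M.lAA - g M.lAA| ≤ ε := hfg _ M.lAA_mem
  have hA : |(M.CL + M.β * f (M.T p)) - (M.CL + M.β * g (M.T p))| ≤ M.β * ε := by
    have : (M.CL + M.β * f (M.T p)) - (M.CL + M.β * g (M.T p))
        = M.β * (f (M.T p) - g (M.T p)) := by ring
    rw [this, abs_mul, abs_of_nonneg hβ]
    exact mul_le_mul_of_nonneg_left h1' hβ
  have hD : |((1 - p) * M.CHN + p * M.CHA + M.β * ((1 - p) * f M.lNA + p * f M.lAA))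
      - ((1 - p) * M.CHN + p * M.CHA + M.β * ((1 - p) * g M.lNA + p * g M.lAA))|
      ≤ M.β * ε := by
    have heq : ((1 - p) * M.CHN + p * M.CHA + M.β * ((1 - p) * f M.lNA + p * f M.lAA))
        - ((1 - p) * M.CHN + p * M.CHA + M.β * ((1 - p) * g M.lNA + p * g M.lAA))
        = M.β * ((1 - p) * (f M.lNA - g M.lNA) + p * (f M.lAA - g M.lAA)) := by ring
    rw [heq, abs_mul, abs_of_nonneg hβ]
    refine mul_le_mul_of_nonneg_left ?_ hβ
    calc |(1 - p) * (f M.lNA - g M.lNA) + p * (f M.lAA - g M.lAA)|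
        ≤ |(1 - p) * (f M.lNA - g M.lNA)| + |p * (f M.lAA - g M.lAA)| := abs_add_le _ _
      _ = (1 - p) * |f M.lNA - g M.lNA| + p * |f M.lAA - g M.lAA| := by
          rw [abs_mul, abs_mul, abs_of_nonneg (by linarith), abs_of_nonneg h0]
      _ ≤ (1 - p) * ε + p * ε := by
          have e0 : (0:ℝ) ≤ ε := le_trans (abs_nonneg _) h2
          gcongr <;> linarith
      _ = ε := by ring
  calc |M.B f p - M.B g p| ≤ max (|(M.CL + M.β * f (M.T p)) - (M.CL + M.β * g (M.T p))|)
        (|((1 - p) * M.CHN + p * M.CHA + M.β * ((1 - p) * f M.lNA + p * f M.lAA))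
          - ((1 - p) * M.CHN + p * M.CHA + M.β * ((1 - p) * g M.lNA + p * g M.lAA))|) :=
        abs_min_sub_min_le_max _ _ _ _
    _ ≤ M.β * ε := max_le hA hD

/-- Concavity on `[0,1]`. -/
def Conc (f : ℝ → ℝ) : Prop :=
  ∀ a ∈ Set.Icc (0:ℝ) 1, ∀ b ∈ Set.Icc (0:ℝ) 1, ∀ t ∈ Set.Icc (0:ℝ) 1,
    (1 - t) * f a + t * f b ≤ f ((1 - t) * a + t * b)

lemma mix_mem {a b t : ℝ} (ha : a ∈ Set.Icc (0:ℝ) 1) (hb : b ∈ Set.Icc (0:ℝ) 1)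
    (ht : t ∈ Set.Icc (0:ℝ) 1) : (1 - t) * a + t * b ∈ Set.Icc (0:ℝ) 1 := by
  obtain ⟨a0, a1⟩ := ha; obtain ⟨b0, b1⟩ := hb; obtain ⟨t0, t1⟩ := ht
  constructor <;> nlinarith

/-- The Bellman operator preserves concavity. -/
lemma conc_B (f : ℝ → ℝ) (hf : Conc f) : Conc (M.B f) := by
  intro a ha b hb t ht
  obtain ⟨t0, t1⟩ := ht
  have hTa := M.T_mem ha
  have hTb := M.T_mem hb
  have hAa : M.B f a ≤ M.CL + M.β * f (M.T a) := min_le_left _ _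
  have hAb : M.B f b ≤ M.CL + M.β * f (M.T b) := min_le_left _ _
  have hDa : M.B f a ≤ (1 - a) * M.CHN + a * M.CHA
      + M.β * ((1 - a) * f M.lNA + a * f M.lAA) := min_le_right _ _
  have hDb : M.B f b ≤ (1 - b) * M.CHN + b * M.CHA
      + M.β * ((1 - b) * f M.lNA + b * f M.lAA) := min_le_right _ _
  refine le_min ?_ ?_
  · -- LP branch
    have hconc := hf (M.T a) hTa (M.T b) hTb t ⟨t0, t1⟩
    have hTmix : (1 - t) * M.T a + t * M.T b = M.T ((1 - t) * a + t * b) := by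
      unfold T; ring
    rw [hTmix] at hconc
    have hβ := M.β_pos.le
    calc (1 - t) * M.B f a + t * M.B f b
        ≤ (1 - t) * (M.CL + M.β * f (M.T a)) + t * (M.CL + M.β * f (M.T b)) := by
          gcongr <;> linarith
      _ = M.CL + M.β * ((1 - t) * f (M.T a) + t * f (M.T b)) := by ring
      _ ≤ M.CL + M.β * f (M.T ((1 - t) * a + t * b)) :=
          add_le_add_right (mul_le_mul_of_nonneg_left hconc hβ) _
  · -- HP branch is affine
    calc (1 - t) * M.B f a + t * M.B f b
        ≤ (1 - t) * ((1 - a) * M.CHN + a * M.CHA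
            + M.β * ((1 - a) * f M.lNA + a * f M.lAA))
          + t * ((1 - b) * M.CHN + b * M.CHA
            + M.β * ((1 - b) * f M.lNA + b * f M.lAA)) := by
          gcongr <;> linarith
      _ = (1 - ((1 - t) * a + t * b)) * M.CHN + ((1 - t) * a + t * b) * M.CHA
          + M.β * ((1 - ((1 - t) * a + t * b)) * f M.lNA
            + ((1 - t) * a + t * b) * f M.lAA) := by ring

/-- Key concavity inequality for the value function. -/
lemma V_concave_ineq (V : ℝ → ℝ) (hV : M.IsValue V)
    {p : ℝ} (hp : p ∈ Set.Icc (0:ℝ) 1) :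
    (1 - p) * V M.lNA + p * V M.lAA ≤ V (M.T p) := by
  obtain ⟨⟨C, hC⟩, hfix⟩ := hV
  set fn : ℕ → ℝ → ℝ := fun n => (M.B)^[n] (fun _ => 0) with hfn
  have hC0 : 0 ≤ C := le_trans (abs_nonneg _) (hC 0 ⟨le_refl 0, zero_le_one⟩)
  -- each iterate is concave
  have hconc : ∀ n, Conc (fn n) := by
    intro n
    induction n with
    | zero =>
        intro a _ b _ t _
        simp [hfn]
    | succ n ih =>
        have : fn (n + 1) = M.B (fn n) := by
          simp [hfn, Function.iterate_succ_apply']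
        rw [this]
        exact M.conc_B _ ih
  -- error bound
  have herr : ∀ n, ∀ q ∈ Set.Icc (0:ℝ) 1, |fn n q - V q| ≤ M.β ^ n * C := by
    intro n
    induction n with
    | zero =>
        intro q hq
        simpa [hfn, abs_sub_comm] using hC q hq
    | succ n ih =>
        intro q hq
        have h1 : fn (n + 1) q = M.B (fn n) q := by
          simp [hfn, Function.iterate_succ_apply']
        have h2 : V q = M.B V q := hfix q hq
        rw [h1, h2]
        have := M.contract (fn n) V (M.β ^ n * C) ih hq
        calc |M.B (fn n) q - M.B V q| ≤ M.β * (M.β ^ n * C) := this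
          _ = M.β ^ (n + 1) * C := by ring
  obtain ⟨p0, p1⟩ := hp
  have hTp := M.T_mem ⟨p0, p1⟩
  -- for each n
  have key : ∀ n : ℕ, (1 - p) * V M.lNA + p * V M.lAA
      ≤ V (M.T p) + 2 * (M.β ^ n * C) := by
    intro n
    have e0 : 0 ≤ M.β ^ n * C := mul_nonneg (pow_nonneg M.β_pos.le n) hC0
    have h1 := herr n M.lNA M.lNA_mem
    have h2 := herr n M.lAA M.lAA_mem
    have h3 := herr n (M.T p) hTp
    have hcc : (1 - p) * fn n M.lNA + p * fn n M.lAA ≤ fn n (M.T p) := by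
      have := hconc n M.lNA M.lNA_mem M.lAA M.lAA_mem p ⟨p0, p1⟩
      simpa [T] using this
    have a1 := abs_le.mp h1
    have a2 := abs_le.mp h2
    have a3 := abs_le.mp h3
    nlinarith [a1.1, a1.2, a2.1, a2.2, a3.1, a3.2]
  have hlim : Filter.Tendsto (fun n : ℕ => V (M.T p) + 2 * (M.β ^ n * C))
      Filter.atTop (nhds (V (M.T p) + 2 * (0 * C))) := by
    have hβ : Filter.Tendsto (fun n : ℕ => M.β ^ n) Filter.atTop (nhds 0) :=
      tendsto_pow_atTop_nhds_zero_of_lt_one M.β_pos.le M.β_lt_one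
    exact Filter.Tendsto.const_add _ (((hβ.mul_const C)).const_mul 2)
  have : V (M.T p) + 2 * (0 * C) = V (M.T p) := by ring
  rw [this] at hlim
  exact ge_of_tendsto' hlim key

end CouponModel

/-- If `p ≤ κ = (C_L - C_HN)/(C_HA - C_HN)`, then the HP-value at `p` is at most
the LP-value at `p`; hence `V(p)` equals the HP-value and offering the
high-privacy coupon is optimal at belief `p`. -/
theorem hp_optimal_below_kappa (M : CouponModel) (hC : M.CHN < M.CHA)
    (V : ℝ → ℝ) (hV : M.IsValue V)
    (p : ℝ) (hp : p ∈ Set.Icc (0:ℝ) 1)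
    (hpκ : p ≤ (M.CL - M.CHN) / (M.CHA - M.CHN)) :
    M.HPval V p ≤ M.LPval V p ∧ V p = M.HPval V p := by
  have hβ := M.β_pos.le
  have hsub : 0 < M.CHA - M.CHN := sub_pos.mpr hC
  have hmy : p * (M.CHA - M.CHN) ≤ M.CL - M.CHN := (le_div_iff₀ hsub).mp hpκ
  have hcc := M.V_concave_ineq V hV hp
  have hle : M.HPval V p ≤ M.LPval V p := by
    unfold CouponModel.HPval CouponModel.LPval
    nlinarith [hcc]
  refine ⟨hle, ?_⟩
  have := hV.2 p hp
  rw [this]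
  unfold CouponModel.B
  exact min_eq_right hle
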